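/- Let V be a real inner product space and let R : V × V × V × V → ℝ be an algebraic curvature tensor. Let λ, μ ∈ ℝ and let v₁, v₂, v₃, v₄ ∈ V be orthonormal vectors. Suppose that the following three equations hold: (1) R(v₁,v₃,v₁,v₃) + λ²·R(v₁,v₄,v₁,v₄) + μ²·R(v₂,v₃,v₂,v₃) + λ²μ²·R(v₂,v₄,v₂,v₄) − 2λμ·R(v₁,v₂,v₃,v₄) = 0; (2) R(v₁,v₂,v₁,v₂) + λ²·R(v₂,v₄,v₂,v₄) + μ²·R(v₁,v₃,v₁,v₃) + λ²μ²·R(v₃,v₄,v₃,v₄) − 2λμ·R(v₂,v₃,v₁,v₄) = 0; (3) R(v₂,v₃,v₂,v₃) + λ²·R(v₃,v₄,v₃,v₄) + μ²·R(v₁,v₂,v₁,v₂) + λ²μ²·R(v₁,v₄,v₁,v₄) − 2λμ·R(v₃,v₁,v₂,v₄) = 0. Then [R(v₁,v₂,v₁,v₂) + R(v₁,v₃,v₁,v₃) + R(v₂,v₃,v₂,v₃)] + λ²·[R(v₁,v₄,v₁,v₄) + R(v₂,v₄,v₂,v₄) + R(v₃,v₄,v₃,v₄)] = 0. -/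
import Mathlib


open scoped RealInnerProductSpace

/-- An algebraic curvature tensor on a real inner product space `V`: a multilinear map
`R : V × V × V × V → ℝ` that is antisymmetric in the first and last pairs of arguments,
symmetric under interchange of the two pairs, and satisfies the first Bianchi identity. -/
structure IsAlgCurvTensor {V : Type*} [NormedAddCommGroup V] [InnerProductSpace ℝ V]
    (R : V → V → V → V → ℝ) : Prop where
  linear_fst : ∀ y z w, IsLinearMap ℝ fun x => R x y z w
  linear_snd : ∀ x z w, IsLinearMap ℝ fun y => R x y z w
  linear_trd : ∀ x y w, IsLinearMap ℝ fun z => R x y z w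
  linear_fth : ∀ x y z, IsLinearMap ℝ fun w => R x y z w
  antisymm_fst : ∀ x y z w, R x y z w = -R y x z w
  antisymm_snd : ∀ x y z w, R x y z w = -R x y w z
  pair_symm : ∀ x y z w, R x y z w = R z w x y
  bianchi : ∀ x y z w, R x y z w + R y z x w + R z x y w = 0

/-- Adding the three vanishing modified isotropic curvature identities and dividing by
`1 + μ²` yields the vanishing of the sum of the six sectional curvature terms. -/
theorem sum_of_three_isotropic_identities
    {V : Type*} [NormedAddCommGroup V] [InnerProductSpace ℝ V]
    (R : V → V → V → V → ℝ) (hR : IsAlgCurvTensor R)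
    (l m : ℝ) (v₁ v₂ v₃ v₄ : V)
    (hv : Orthonormal ℝ ![v₁, v₂, v₃, v₄])
    (h1 : R v₁ v₃ v₁ v₃ + l ^ 2 * R v₁ v₄ v₁ v₄ + m ^ 2 * R v₂ v₃ v₂ v₃
        + l ^ 2 * m ^ 2 * R v₂ v₄ v₂ v₄ - 2 * l * m * R v₁ v₂ v₃ v₄ = 0)
    (h2 : R v₁ v₂ v₁ v₂ + l ^ 2 * R v₂ v₄ v₂ v₄ + m ^ 2 * R v₁ v₃ v₁ v₃
        + l ^ 2 * m ^ 2 * R v₃ v₄ v₃ v₄ - 2 * l * m * R v₂ v₃ v₁ v₄ = 0)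
    (h3 : R v₂ v₃ v₂ v₃ + l ^ 2 * R v₃ v₄ v₃ v₄ + m ^ 2 * R v₁ v₂ v₁ v₂
        + l ^ 2 * m ^ 2 * R v₁ v₄ v₁ v₄ - 2 * l * m * R v₃ v₁ v₂ v₄ = 0) :
    (R v₁ v₂ v₁ v₂ + R v₁ v₃ v₁ v₃ + R v₂ v₃ v₂ v₃)
      + l ^ 2 * (R v₁ v₄ v₁ v₄ + R v₂ v₄ v₂ v₄ + R v₃ v₄ v₃ v₄) = 0 := by
  have hb := hR.bianchi v₁ v₂ v₃ v₄
  have hm : (0:ℝ) < 1 + m ^ 2 := by positivity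
  have key : (1 + m ^ 2) * ((R v₁ v₂ v₁ v₂ + R v₁ v₃ v₁ v₃ + R v₂ v₃ v₂ v₃)
      + l ^ 2 * (R v₁ v₄ v₁ v₄ + R v₂ v₄ v₂ v₄ + R v₃ v₄ v₃ v₄)) = 0 := by
    linear_combination h1 + h2 + h3 + 2 * l * m * hb
  exact (mul_eq_zero.mp key).resolve_left (ne_of_gt hm)
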